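/- Let f : S¹ → S¹ be an orientation preserving homeomorphism with no periodic point. Then either the nonwandering set Ω(f) is the whole circle S¹, or Ω(f) is a nowhere dense perfect subset of S¹. -/
import Mathlib


/-- The circle, as `ℝ/ℤ`. -/
abbrev S1 : Type := AddCircle (1 : ℝ)

/-- A circle homeomorphism is orientation preserving if it has a continuous strictly
monotone increasing lift commuting with the deck translation `x ↦ x + 1`. -/
def OrientationPreserving (f : S1 ≃ₜ S1) : Prop :=
  ∃ F : ℝ → ℝ, StrictMono F ∧ Continuous F ∧ (∀ x : ℝ, F (x + 1) = F x + 1) ∧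
    ∀ x : ℝ, f ((x : ℝ) : S1) = ((F x : ℝ) : S1)

/-- The `k`-th iterate of a homeomorphism, for `k : ℤ`. -/
noncomputable def zIter (f : S1 ≃ₜ S1) (k : ℤ) : S1 → S1 :=
  if 0 ≤ k then (⇑f)^[k.toNat] else (⇑f.symm)^[(-k).toNat]

/-- `f` has no periodic point. -/
def NoPeriodicPoint (f : S1 ≃ₜ S1) : Prop :=
  ∀ (x : S1) (n : ℕ), 1 ≤ n → (⇑f)^[n] x ≠ x

/-- `x` is a nonwandering point of `f`: every neighborhood `U` of `x` meets `f^k(U)`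
for some nonzero integer `k`. -/
def IsNonwandering (f : S1 ≃ₜ S1) (x : S1) : Prop :=
  ∀ U ∈ nhds x, ∃ k : ℤ, k ≠ 0 ∧ (zIter f k '' U ∩ U).Nonempty

/-- The nonwandering set `Ω(f)`. -/
def nonwanderingSet (f : S1 ≃ₜ S1) : Set S1 := {x | IsNonwandering f x}

/-- The ω-limit set of the orbit of `x`. -/
def omegaSet (f : S1 ≃ₜ S1) (x : S1) : Set S1 :=
  ⋂ n : ℕ, closure {y | ∃ k ≥ n, (⇑f)^[k] x = y}

/-- The α-limit set of the orbit of `x`. -/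
def alphaSet (f : S1 ≃ₜ S1) (x : S1) : Set S1 :=
  ⋂ n : ℕ, closure {y | ∃ k ≥ n, (⇑f.symm)^[k] x = y}

open Set Function

namespace NWAux

lemma coe_add_int (x : ℝ) (n : ℤ) : ((x + n : ℝ) : S1) = (x : S1) := by
  have h : ((n : ℝ) : S1) = 0 := by
    rw [AddCircle.coe_eq_zero_iff]; exact ⟨n, by simp⟩
  rw [AddCircle.coe_add, h, add_zero]

lemma coe_eq_coe {x y : ℝ} (h : ((x : S1) = (y : S1))) : ∃ n : ℤ, x = y + n := by
  rw [QuotientAddGroup.eq_iff_sub_mem] at h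
  obtain ⟨n, hn⟩ := h
  simp only [zsmul_eq_mul, mul_one] at hn
  exact ⟨n, by linarith [hn]⟩

lemma coe_surj : Function.Surjective ((↑) : ℝ → S1) :=
  QuotientAddGroup.mk'_surjective _

lemma isOpenMap_coe : IsOpenMap ((↑) : ℝ → S1) :=
  fun s hs => QuotientAddGroup.isOpenMap_coe s hs

/-- From nonwandering, extract a positive-iterate return. -/
lemma exists_pos_return {f : S1 ≃ₜ S1} {z : S1} (hnw : IsNonwandering f z)
    {U : Set S1} (hU : U ∈ nhds z) :
    ∃ m : ℕ, 1 ≤ m ∧ ∃ v ∈ U, (⇑f)^[m] v ∈ U := by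
  obtain ⟨k, hk0, y, hy1, hy2⟩ := hnw U hU
  obtain ⟨u, hu, rfl⟩ := hy1
  by_cases hk : 0 ≤ k
  · refine ⟨k.toNat, ?_, u, hu, ?_⟩
    · omega
    · simpa [zIter, if_pos hk] using hy2
  · have hj : 1 ≤ (-k).toNat := by omega
    have hz : zIter f k = (⇑f.symm)^[(-k).toNat] := by simp [zIter, if_neg hk]
    refine ⟨(-k).toNat, hj, zIter f k u, hy2, ?_⟩
    rw [hz]
    have hli : Function.LeftInverse (⇑f) (⇑f.symm) := f.apply_symm_apply
    have h2 : (⇑f)^[(-k).toNat] ((⇑f.symm)^[(-k).toNat] u) = u := hli.iterate (-k).toNat u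
    rw [h2]; exact hu

/-- iterate of a lift still commutes with translation. -/
lemma iterate_add_one {F : ℝ → ℝ} (hp : ∀ x, F (x + 1) = F x + 1) (m : ℕ) (x : ℝ) :
    F^[m] (x + 1) = F^[m] x + 1 := by
  induction m generalizing x with
  | zero => simp
  | succ m ih => rw [Function.iterate_succ_apply, Function.iterate_succ_apply, hp, ih]

/-- a continuous map commuting with translation is surjective (given it's monotone not needed). -/
lemma surj_of_comm {G : ℝ → ℝ} (hc : Continuous G) (hp : ∀ x, G (x + 1) = G x + 1) :
    Function.Surjective G := by
  have key : ∀ (j : ℕ) (x : ℝ), G (x + j) = G x + j := by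
    intro j
    induction j with
    | zero => simp
    | succ j ih =>
      intro x
      push_cast
      rw [← add_assoc, hp, ih]
      ring
  intro c
  obtain ⟨j, hj⟩ := exists_nat_ge |c - G 0|
  have habs := abs_le.mp hj
  have h1 : G (0 - (j : ℝ)) ≤ c := by
    have : G (0 - (j : ℝ) + (j : ℝ)) = G (0 - (j : ℝ)) + j := key j _
    simp only [sub_add_cancel] at this
    linarith [habs.1]
  have h2 : c ≤ G (0 + (j : ℝ)) := by
    rw [key j 0]
    linarith [habs.2]
  have hle : (0 : ℝ) - j ≤ 0 + j := by
    have : (0:ℝ) ≤ j := Nat.cast_nonneg j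
    linarith
  obtain ⟨x, _, hx⟩ := intermediate_value_Icc hle hc.continuousOn ⟨h1, h2⟩
  exact ⟨x, hx⟩

/-- lift of iterates. -/
lemma lift_iterate {f : S1 ≃ₜ S1} {F : ℝ → ℝ}
    (hF : ∀ x : ℝ, f ((x : ℝ) : S1) = ((F x : ℝ) : S1)) (m : ℕ) (x : ℝ) :
    (⇑f)^[m] ((x : ℝ) : S1) = ((F^[m] x : ℝ) : S1) := by
  induction m generalizing x with
  | zero => simp
  | succ m ih =>
    rw [Function.iterate_succ_apply, Function.iterate_succ_apply, hF, ih]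

/-- Existence of a minimal set. -/
lemma exists_minimal (f : S1 ≃ₜ S1) :
    ∃ M : Set S1, M.Nonempty ∧ IsClosed M ∧ f '' M ⊆ M ∧
      ∀ A : Set S1, A.Nonempty → IsClosed A → f '' A ⊆ A → A ⊆ M → A = M := by
  set S : Set (Set S1) := {A | A.Nonempty ∧ IsClosed A ∧ f '' A ⊆ A} with hS
  have H : ∀ c ⊆ S, IsChain (· ⊆ ·) c → c.Nonempty → ∃ lb ∈ S, ∀ s ∈ c, lb ⊆ s := by
    intro c hcS hchain hcne
    have hne : (⋂₀ c).Nonempty := by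
      haveI : Nonempty c := hcne.to_subtype
      have hdir : Directed (· ⊇ ·) (fun A : c => (A : Set S1)) := by
        intro A B
        rcases hchain.total A.2 B.2 with h | h
        · exact ⟨A, le_refl _, h⟩
        · exact ⟨B, h, le_refl _⟩
      have := IsCompact.nonempty_iInter_of_directed_nonempty_isCompact_isClosed
        (fun A : c => (A : Set S1)) hdir (fun A => (hcS A.2).1)
        (fun A => (hcS A.2).2.1.isCompact) (fun A => (hcS A.2).2.1)
      rwa [sInter_eq_iInter]
    refine ⟨⋂₀ c, ⟨hne, isClosed_sInter fun A hA => (hcS hA).2.1, ?_⟩,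
      fun s hs => sInter_subset_of_mem hs⟩
    rintro y ⟨x, hx, rfl⟩
    rw [mem_sInter] at hx ⊢
    intro A hA
    exact (hcS hA).2.2 ⟨x, hx A hA, rfl⟩
  obtain ⟨M, -, hM⟩ := zorn_superset_nonempty S H univ
    ⟨univ_nonempty, isClosed_univ, subset_univ _⟩
  refine ⟨M, hM.1.1, hM.1.2.1, hM.1.2.2, fun A hA1 hA2 hA3 hAM => ?_⟩
  exact hAM.antisymm (hM.2 ⟨hA1, hA2, hA3⟩ hAM)

end NWAux

open NWAux in
/-- for an orientation preserving circle homeomorphism with no periodic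
point, the nonwandering set is either the whole circle or a nowhere dense perfect set. -/
theorem nonwanderingSet_univ_or_nowhereDense_perfect (f : S1 ≃ₜ S1)
    (hor : OrientationPreserving f) (hnp : NoPeriodicPoint f) :
    nonwanderingSet f = Set.univ ∨
      (IsNowhereDense (nonwanderingSet f) ∧ Perfect (nonwanderingSet f)) := by
  obtain ⟨M, hMne, hMcl, hMinv, hMmin⟩ := exists_minimal f
  -- invariance upgraded to equality
  have hMeq : f '' M = M := by
    refine hMmin _ (hMne.image _) ?_ ?_ hMinv
    · exact ((hMcl.isCompact).image f.continuous).isClosed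
    · exact Set.image_mono hMinv
  have hmem_iter : ∀ (k : ℕ) (y : S1), y ∈ M → (⇑f)^[k] y ∈ M := by
    intro k
    induction k with
    | zero => simpa using fun y h => h
    | succ k ih =>
      intro y hy
      rw [Function.iterate_succ_apply']
      exact hMinv ⟨_, ih y hy, rfl⟩
  have hmem_iter_iff : ∀ (k : ℕ) (y : S1), (⇑f)^[k] y ∈ M ↔ y ∈ M := by
    intro k
    induction k with
    | zero => simp
    | succ k ih =>
      intro y
      rw [Function.iterate_succ_apply, ih]
      constructor
      · intro h
        rw [← hMeq] at h
        obtain ⟨w, hw, hwy⟩ := h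
        rwa [← f.injective hwy]
      · intro h; exact hMinv ⟨y, h, rfl⟩
  -- every point of M is in the closure of its strictly forward orbit
  have horb : ∀ x ∈ M, x ∈ closure {y | ∃ k : ℕ, 1 ≤ k ∧ (⇑f)^[k] x = y} := by
    intro x hx
    set Sx := {y | ∃ k : ℕ, 1 ≤ k ∧ (⇑f)^[k] x = y} with hSx
    have h1 : Sx ⊆ M := by
      rintro y ⟨k, hk, rfl⟩
      exact hmem_iter k x hx
    have hfSx : f '' Sx ⊆ Sx := by
      rintro y ⟨w, ⟨k, hk, rfl⟩, rfl⟩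
      exact ⟨k + 1, by omega, by rw [Function.iterate_succ_apply']⟩
    have h2 : f '' closure Sx ⊆ closure Sx :=
      ((image_closure_subset_closure_image f.continuous).trans (closure_mono hfSx))
    have h3 : closure Sx ⊆ M := closure_minimal h1 hMcl
    have h4 : (closure Sx).Nonempty := ⟨f x, subset_closure ⟨1, le_refl 1, by simp⟩⟩
    have := hMmin _ h4 isClosed_closure h2 h3
    rw [this]; exact hx
  -- points of M are nonwandering
  have hM_sub : M ⊆ nonwanderingSet f := by
    intro x hx U hU
    have := horb x hx
    rw [mem_closure_iff_nhds] at this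
    obtain ⟨y, hyU, k, hk, rfl⟩ := this U hU
    refine ⟨(k : ℤ), Int.natCast_ne_zero.mpr (by omega), ?_⟩
    have hz : zIter f (k : ℤ) = (⇑f)^[k] := by simp [zIter]
    exact ⟨(⇑f)^[k] x, ⟨x, mem_of_mem_nhds hU, by rw [hz]⟩, hyU⟩
  by_cases hMuniv : M = univ
  · left
    rw [eq_univ_iff_forall]
    intro x
    exact hM_sub (hMuniv ▸ mem_univ x)
  -- the main case: M ≠ univ.  We show Ω(f) = M.
  obtain ⟨F, hFmono, hFcont, hFper, hFlift⟩ := hor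
  have hgap : ∀ z ∉ M, ¬ IsNonwandering f z := by
    intro z hz hnw
    set V : Set ℝ := ((↑) : ℝ → S1) ⁻¹' Mᶜ with hV
    have hVopen : IsOpen V := hMcl.isOpen_compl.preimage continuous_quotient_mk'
    obtain ⟨t, rfl⟩ := coe_surj z
    have htV : t ∈ V := hz
    set I := connectedComponentIn V t with hI
    have htI : t ∈ I := mem_connectedComponentIn htV
    have hIV : I ⊆ V := connectedComponentIn_subset V t
    have hIopen : IsOpen I := hVopen.connectedComponentIn
    have hIpc : IsPreconnected I := isPreconnected_connectedComponentIn
    have hIoc : OrdConnected I := hIpc.ordConnected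
    set U := ((↑) : ℝ → S1) '' I with hU
    have hUnhds : U ∈ nhds ((t : ℝ) : S1) :=
      (isOpenMap_coe I hIopen).mem_nhds ⟨t, htI, rfl⟩
    obtain ⟨m, hm, v, hvU, hfvU⟩ := exists_pos_return hnw hUnhds
    obtain ⟨s, hsI, rfl⟩ := hvU
    rw [lift_iterate hFlift m s] at hfvU
    obtain ⟨s', hs'I, hs's⟩ := hfvU
    obtain ⟨n, hn⟩ := coe_eq_coe hs's.symm
    -- hn : F^[m] s = s' + n
    set G : ℝ → ℝ := fun x => F^[m] x - n with hG
    have hGmono : StrictMono G := fun a b hab => by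
      simpa [hG] using hFmono.iterate m hab
    have hGcont : Continuous G := ((hFcont.iterate m).sub continuous_const)
    have hGper : ∀ x, G (x + 1) = G x + 1 := by
      intro x
      simp only [hG]
      rw [iterate_add_one hFper m x]; ring
    have hGsurj : Function.Surjective G := surj_of_comm hGcont hGper
    have hGcoe : ∀ x : ℝ, ((G x : ℝ) : S1) = (⇑f)^[m] ((x : ℝ) : S1) := by
      intro x
      rw [lift_iterate hFlift m x]
      have : F^[m] x - n = F^[m] x + (-n : ℤ) := by push_cast; ring
      rw [hG]
      show ((F^[m] x - (n:ℝ) : ℝ) : S1) = _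
      rw [this, coe_add_int]
    have hGV : ∀ x, G x ∈ V ↔ x ∈ V := by
      intro x
      simp only [hV, mem_preimage, mem_compl_iff]
      rw [hGcoe x]
      rw [hmem_iter_iff m]
    -- G as an order isomorphism / homeomorphism of ℝ
    set e : ℝ ≃o ℝ := StrictMono.orderIsoOfSurjective G hGmono hGsurj with he
    have hecoe : ∀ x, e x = G x := fun x => rfl
    have heinv : ∀ x, e.symm x ∈ V ↔ x ∈ V := by
      intro x
      rw [← hGV (e.symm x), ← hecoe, e.apply_symm_apply]
    have hGimgV : G '' V = V := by
      ext y
      constructor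
      · rintro ⟨x, hx, rfl⟩; exact (hGV x).mpr hx
      · intro hy
        refine ⟨e.symm y, (heinv y).mpr hy, ?_⟩
        rw [← hecoe, e.apply_symm_apply]
    have hGsymmV : e.symm '' V = V := by
      ext y
      constructor
      · rintro ⟨x, hx, rfl⟩; exact (heinv x).mpr hx
      · intro hy
        exact ⟨G y, (hGV y).mpr hy, by rw [← hecoe, e.symm_apply_apply]⟩
    have hetop : Continuous e.symm := (OrderIso.toHomeomorph e).symm.continuous
    -- G maps I onto the component of G s'.. show G '' I = I
    have hcomp1 : connectedComponentIn V s = I := (connectedComponentIn_eq hsI).symm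
    have hcomp2 : connectedComponentIn V s' = I := (connectedComponentIn_eq hs'I).symm
    have hGsV : G s ∈ V := (hGV s).mpr (hIV hsI)
    have hGs : G s = s' := by simp only [hG, hn]; ring
    have hGII : G '' I = I := by
      have hsub1 : G '' I ⊆ I := by
        have h1 := Continuous.image_connectedComponentIn_subset hGcont (hIV hsI)
        rw [hGimgV, hcomp1, hGs, hcomp2] at h1
        exact h1
      have hsub2 : Function.invFun G '' I ⊆ I := by
        have hes' : e.symm s' ∈ V := (heinv s').mpr (hIV hs'I)
        have h1 := Continuous.image_connectedComponentIn_subset hetop (hIV hs'I)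
        rw [hGsymmV, hcomp2] at h1
        have h2 : e.symm s' = s := by
          rw [← hGs, ← hecoe, e.symm_apply_apply]
        rw [h2, hcomp1] at h1
        have : Function.invFun G = ⇑e.symm := by
          funext y
          apply hGmono.injective
          rw [Function.rightInverse_invFun hGsurj y, ← hecoe, e.apply_symm_apply]
        rw [this]
        exact h1
      refine hsub1.antisymm ?_
      intro y hy
      refine ⟨e.symm y, ?_, by rw [← hecoe, e.apply_symm_apply]⟩
      have : Function.invFun G = ⇑e.symm := by
        funext x
        apply hGmono.injective
        rw [Function.rightInverse_invFun hGsurj x, ← hecoe, e.apply_symm_apply]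
      rw [← this]
      exact hsub2 ⟨y, hy, rfl⟩
    -- bounded: pick a point of M to bound I
    obtain ⟨e₀, he₀⟩ := hMne
    obtain ⟨w, rfl⟩ := coe_surj e₀
    have hwV : ∀ j : ℤ, w + (j : ℝ) ∉ V := by
      intro j hj
      exact hj (by rw [coe_add_int]; exact he₀)
    have hbdd_above : ∀ x ∈ I, x < w + (⌈t - w⌉ : ℤ) := by
      intro x hx
      by_contra hcx
      push_neg at hcx
      have hct : t ≤ w + ((⌈t - w⌉ : ℤ) : ℝ) := by
        have := Int.le_ceil (t - w)
        linarith
      exact hwV ⌈t - w⌉ (hIV (hIoc.out htI hx ⟨hct, hcx⟩))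
    have hbdd_below : ∀ x ∈ I, w + ((⌊t - w⌋ - 1 : ℤ) : ℝ) < x := by
      intro x hx
      by_contra hcx
      push_neg at hcx
      have hct : w + ((⌊t - w⌋ - 1 : ℤ) : ℝ) ≤ t := by
        have := Int.floor_le (t - w)
        push_cast
        linarith
      exact hwV (⌊t - w⌋ - 1) (hIV (hIoc.out hx htI ⟨hcx, hct⟩))
    have hInon : I.Nonempty := ⟨t, htI⟩
    have hbdda : BddAbove I := ⟨w + (⌈t - w⌉ : ℤ), fun x hx => (hbdd_above x hx).le⟩
    have hbddb : BddBelow I := ⟨w + ((⌊t - w⌋ - 1 : ℤ) : ℝ), fun x hx => (hbdd_below x hx).le⟩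
    set a := sInf I with ha
    set b := sSup I with hb
    have haI : a ∉ I := by
      intro haI
      obtain ⟨ε, hε, hball⟩ := Metric.isOpen_iff.mp hIopen a haI
      have hmem : a - ε / 2 ∈ I := by
        apply hball
        rw [Metric.mem_ball, Real.dist_eq]
        rw [abs_of_nonpos (by linarith)]
        linarith
      have := csInf_le hbddb hmem
      rw [← ha] at this
      linarith
    have hbI : b ∉ I := by
      intro hbI
      obtain ⟨ε, hε, hball⟩ := Metric.isOpen_iff.mp hIopen b hbI
      have hmem : b + ε / 2 ∈ I := by
        apply hball
        rw [Metric.mem_ball, Real.dist_eq]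
        rw [abs_of_nonneg (by linarith)]
        linarith
      have := le_csSup hbdda hmem
      rw [← hb] at this
      linarith
    have hIoo : I = Set.Ioo a b := by
      ext x
      constructor
      · intro hx
        constructor
        · refine (csInf_le hbddb hx).lt_of_ne fun h => haI ?_
          rw [ha, h]; exact hx
        · refine (le_csSup hbdda hx).lt_of_ne fun h => hbI ?_
          rw [hb, ← h]; exact hx
      · rintro ⟨h1, h2⟩
        obtain ⟨p, hpI, hpx⟩ := exists_lt_of_csInf_lt hInon h1
        obtain ⟨q, hqI, hxq⟩ := exists_lt_of_lt_csSup hInon h2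
        exact hIoc.out hpI hqI ⟨hpx.le, hxq.le⟩
    have haltb : a < b := by
      rw [hIoo] at htI
      exact htI.1.trans htI.2
    have himg : Set.Ioo (G a) (G b) = Set.Ioo a b := by
      have h1 : e '' Set.Ioo a b = Set.Ioo (e a) (e b) := e.image_Ioo a b
      have h2 : e '' Set.Ioo a b = G '' Set.Ioo a b := by
        apply Set.image_congr
        intro x _
        exact hecoe x
      rw [h2, ← hIoo, hGII, hIoo] at h1
      rw [← hecoe a, ← hecoe b] at *
      exact h1.symm
    have hGa : G a = a := by
      have h1 : G a < G b := hGmono haltb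
      have h2 := csInf_Ioo h1
      rw [himg, csInf_Ioo haltb] at h2
      exact h2.symm
    have hper : (⇑f)^[m] ((a : ℝ) : S1) = ((a : ℝ) : S1) := by
      rw [← hGcoe a, hGa]
    exact hnp _ m hm hper
  -- conclude: Ω(f) = M
  have hOmega : nonwanderingSet f = M := by
    apply Set.Subset.antisymm
    · intro z hz
      by_contra h
      exact hgap z h hz
    · exact hM_sub
  right
  rw [hOmega]
  constructor
  · -- nowhere dense
    by_cases hfr : (frontier M).Nonempty
    · have hfrinv : f '' frontier M ⊆ frontier M := by
        rw [f.image_frontier, hMeq]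
      have hfreq : frontier M = M := hMmin _ hfr isClosed_frontier hfrinv hMcl.frontier_subset
      rw [IsNowhereDense, hMcl.closure_eq]
      rw [Set.eq_empty_iff_forall_notMem]
      intro x hx
      have hxM : x ∈ M := interior_subset hx
      rw [← hfreq, hMcl.frontier_eq] at hxM
      exact hxM.2 hx
    · have hclopen : IsClopen M :=
        isClopen_iff_frontier_eq_empty.mpr (Set.not_nonempty_iff_eq_empty.mp hfr)
      exact absurd (hclopen.eq_univ hMne) hMuniv
  · -- perfect
    refine ⟨hMcl, fun x hx => ?_⟩
    rw [accPt_iff_nhds]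
    intro U hU
    have := horb x hx
    rw [mem_closure_iff_nhds] at this
    obtain ⟨y, hyU, k, hk, rfl⟩ := this U hU
    exact ⟨(⇑f)^[k] x, ⟨hyU, hmem_iter k x hx⟩, hnp x k hk⟩
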